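/- Let a < 0 < b be real numbers, let F be holomorphic on the strip Ω_{a,b}, suppose F has a determining function f_l on Ω_{a,0} and a determining function f_r on Ω_{0,b}, and suppose F satisfies the Phragmén–Lindelöf condition on Ω_{a,b}. Then for every δ with 0 < δ < min{|a|, b, 1} there exist constants R₀ > 0 and M > 0 such that for all R ≥ R₀ and all x ∈ [−δ, δ] one has |F(x+iR)/(x+iR)| ≤ M and |F(x−iR)/(x−iR)| ≤ M. -/

import Mathlib

open MeasureTheory

/-- `f` is a (locally integrable) determining function of `F` on the vertical strip
`{s : ℂ | a < Re s < b}`: the bilateral Laplace transform of `f` converges absolutely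
at every point of the strip and represents `F` there. -/
def IsDeterminingOn (F : ℂ → ℂ) (f : ℝ → ℂ) (a b : ℝ) : Prop :=
  MeasureTheory.LocallyIntegrable f MeasureTheory.volume ∧
  ∀ s : ℂ, a < s.re → s.re < b →
    MeasureTheory.Integrable (fun t : ℝ => Complex.exp (-s * t) * f t) ∧
    F s = ∫ t : ℝ, Complex.exp (-s * t) * f t

/-- The Phragmén–Lindelöf growth condition for `F` on the strip `a < Re s < b`. -/
def PhragmenLindelofCond (F : ℂ → ℂ) (a b : ℝ) : Prop :=
  ∃ A B Y K : ℝ, 0 < A ∧ 0 < B ∧ 0 < Y ∧ 0 < K ∧ K < Real.pi / (b - a) ∧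
    ∀ x y : ℝ, a < x → x < b → Y ≤ |y| →
      ‖F (x + y * Complex.I)‖ ≤ A * Real.exp (B * Real.exp (K * |y|))

/-- On a vertical line inside the strip of absolute convergence, `F` is bounded by the
integral of the absolute value of the integrand. -/
lemma line_bound (F : ℂ → ℂ) (f : ℝ → ℂ) (a b x : ℝ)
    (h : IsDeterminingOn F f a b) (hx1 : a < x) (hx2 : x < b) :
    ∀ s : ℂ, s.re = x → ‖F s‖ ≤ ∫ t : ℝ, ‖Complex.exp (-(x : ℂ) * t) * f t‖ := by
  intro s hs
  have h1 := (h.2 s (by rw [hs]; exact hx1) (by rw [hs]; exact hx2)).2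
  rw [h1]
  refine (norm_integral_le_integral_norm _).trans (le_of_eq ?_)
  refine integral_congr_ae (Filter.Eventually.of_forall (fun t => ?_))
  simp only [norm_mul, Complex.norm_exp]
  congr 2
  simp [hs]

theorem statement0 (a b : ℝ) (ha : a < 0) (hb : 0 < b)
    (F : ℂ → ℂ) (fl fr : ℝ → ℂ)
    (hF : DifferentiableOn ℂ F {s : ℂ | a < s.re ∧ s.re < b})
    (hl : IsDeterminingOn F fl a 0) (hr : IsDeterminingOn F fr 0 b)
    (hPL : PhragmenLindelofCond F a b) :
    ∀ δ : ℝ, 0 < δ → δ < min (min |a| b) 1 →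
      ∃ R₀ M : ℝ, 0 < R₀ ∧ 0 < M ∧
        ∀ R : ℝ, R₀ ≤ R → ∀ x : ℝ, x ∈ Set.Icc (-δ) δ →
          ‖F (x + R * Complex.I) / (x + R * Complex.I)‖ ≤ M ∧
          ‖F (x - R * Complex.I) / (x - R * Complex.I)‖ ≤ M := by
  intro δ hδ0 hδlt
  have habs : |a| = -a := abs_of_neg ha
  set m : ℝ := min (min |a| b) 1 with hm
  -- the auxiliary half-width δ'
  set δ' : ℝ := (δ + m) / 2 with hδ'
  have hδ'1 : δ < δ' := by
    simp only [hδ']; linarith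
  have hδ'm : δ' < m := by
    simp only [hδ']; linarith
  have hδ'a : a < -δ' := by
    have : δ' < |a| := lt_of_lt_of_le hδ'm (le_trans (min_le_left _ _) (min_le_left _ _))
    rw [habs] at this; linarith
  have hδ'b : δ' < b := lt_of_lt_of_le hδ'm (le_trans (min_le_left _ _) (min_le_right _ _))
  have hδ'0 : 0 < δ' := lt_trans hδ0 hδ'1
  -- boundary constants
  set Cl : ℝ := ∫ t : ℝ, ‖Complex.exp (-((-δ' : ℝ) : ℂ) * t) * fl t‖ with hCl
  set Cr : ℝ := ∫ t : ℝ, ‖Complex.exp (-((δ' : ℝ) : ℂ) * t) * fr t‖ with hCr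
  set C : ℝ := max Cl Cr with hC
  -- bound on the two boundary lines
  have hleft : ∀ s : ℂ, s.re = -δ' → ‖F s‖ ≤ C := fun s hs =>
    (line_bound F fl a 0 (-δ') hl hδ'a (by linarith) s hs).trans (le_max_left _ _)
  have hright : ∀ s : ℂ, s.re = δ' → ‖F s‖ ≤ C := fun s hs =>
    (line_bound F fr 0 b δ' hr hδ'0 hδ'b s hs).trans (le_max_right _ _)
  -- differentiability on the substrip
  have hsub : Complex.re ⁻¹' Set.Icc (-δ') δ' ⊆ {s : ℂ | a < s.re ∧ s.re < b} := by
    intro z hz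
    exact ⟨lt_of_lt_of_le hδ'a hz.1, lt_of_le_of_lt hz.2 hδ'b⟩
  have hdiff : DiffContOnCl ℂ F (Complex.re ⁻¹' Set.Ioo (-δ') δ') := by
    have hcl : closure (Complex.re ⁻¹' Set.Ioo (-δ') δ') ⊆ Complex.re ⁻¹' Set.Icc (-δ') δ' := by
      refine (Continuous.closure_preimage_subset Complex.continuous_re _).trans ?_
      exact Set.preimage_mono (by rw [closure_Ioo (by linarith : (-δ') ≠ δ')])
    constructor
    · exact hF.mono (fun z hz => hsub ⟨le_of_lt hz.1, le_of_lt hz.2⟩)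
    · exact (hF.continuousOn).mono (fun z hz => hsub (hcl hz))
  -- Phragmén–Lindelöf growth condition on the substrip
  obtain ⟨A, B, Y, K, hA, hB, hY, hK, hKlt, hPLb⟩ := hPL
  have hba : (0:ℝ) < b - a := by linarith
  have hKlt' : K < Real.pi / (δ' - -δ') := by
    have h2δ : δ' - -δ' < b - a := by
      have h1 : δ' < -a := by linarith
      linarith
    calc K < Real.pi / (b - a) := hKlt
      _ ≤ Real.pi / (δ' - -δ') := by
          apply div_le_div_of_nonneg_left Real.pi_pos.le (by linarith) h2δ.le
  have hO : F =O[Filter.comap (_root_.abs ∘ Complex.im) Filter.atTop ⊓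
      Filter.principal (Complex.re ⁻¹' Set.Ioo (-δ') δ')]
      fun z => Real.exp (B * Real.exp (K * |z.im|)) := by
    rw [Asymptotics.isBigO_iff]
    refine ⟨A, ?_⟩
    have hev : ∀ᶠ z : ℂ in Filter.comap (_root_.abs ∘ Complex.im) Filter.atTop,
        Y ≤ |z.im| := Filter.tendsto_comap.eventually (Filter.eventually_ge_atTop Y)
    filter_upwards [hev.filter_mono inf_le_left,
      Filter.eventually_inf_principal.2 (Filter.Eventually.of_forall (fun z hz => hz))]
      with z hzY hzS
    have hz1 : a < z.re := lt_trans hδ'a hzS.1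
    have hz2 : z.re < b := lt_trans hzS.2 hδ'b
    have := hPLb z.re z.im hz1 hz2 hzY
    rw [Complex.re_add_im] at this
    calc ‖F z‖ ≤ A * Real.exp (B * Real.exp (K * |z.im|)) := this
      _ ≤ A * ‖Real.exp (B * Real.exp (K * |z.im|))‖ := by
          rw [Real.norm_eq_abs, abs_of_pos (Real.exp_pos _)]
  -- main Phragmén–Lindelöf bound on the substrip
  have hmain : ∀ z : ℂ, -δ' ≤ z.re → z.re ≤ δ' → ‖F z‖ ≤ C := fun z h1 h2 =>
    PhragmenLindelof.vertical_strip hdiff ⟨K, hKlt', B, hO⟩ hleft hright h1 h2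
  refine ⟨1, C + 1, one_pos, ?_, ?_⟩
  · have : 0 ≤ Cl := integral_nonneg (fun t => norm_nonneg _)
    have hC0 : 0 ≤ C := le_trans this (le_max_left _ _)
    linarith
  · intro R hR x hx
    have hxδ' : -δ' ≤ x ∧ x ≤ δ' := ⟨by linarith [hx.1], by linarith [hx.2]⟩
    have key : ∀ y : ℝ, 1 ≤ |y| →
        ‖F (x + y * Complex.I) / (x + y * Complex.I)‖ ≤ C + 1 := by
      intro y hy
      set z : ℂ := x + y * Complex.I with hz
      have hre : z.re = x := by simp [hz]
      have him : z.im = y := by simp [hz]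
      have hFz : ‖F z‖ ≤ C := hmain z (hre ▸ hxδ'.1) (hre ▸ hxδ'.2)
      have hznorm : 1 ≤ ‖z‖ := le_trans hy (him ▸ Complex.abs_im_le_norm z)
      have hz0 : z ≠ 0 := fun h => by simp [h] at hznorm; linarith
      rw [norm_div]
      have hC0 : 0 ≤ C := le_trans (norm_nonneg _) hFz
      calc ‖F z‖ / ‖z‖ ≤ C / 1 :=
            div_le_div₀ hC0 hFz one_pos hznorm
        _ ≤ C + 1 := by linarith
    constructor
    · exact key R (by rw [abs_of_pos (by linarith : (0:ℝ) < R)]; linarith)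
    · have := key (-R) (by rw [abs_neg, abs_of_pos (by linarith : (0:ℝ) < R)]; linarith)
      simpa [sub_eq_add_neg] using this
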